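/- arXiv:1903.11680 — 4 statements merged into one kernel-verified Lean document; each statement's English description precedes it below -/
import Mathlib

section
/- Let f: R^p → R^n be a differentiable nonlinear mapping with Jacobian J(θ) ∈ R^{n×p}, let y ∈ R^n be corrupted labels, ỹ ∈ R^n uncorrupted labels, e = y − ỹ, θ_0 an initial point, and r_0 = f(θ_0) − y. Let S_+ ⊆ R^n be a subspace with orthogonal complement S_−. Assume that over the Euclidean ball D of radius 4‖r_0‖₂/α around θ_0: (i) α ≤ ‖J(θ)ᵀ v‖₂ ≤ β for every unit vector v ∈ S_+ and every θ ∈ D, and ‖J(θ)ᵀ w‖₂ = 0 for every w ∈ S_−; (ii) ‖J(θ_2) − J(θ_1)‖ ≤ L·‖θ_2 − θ_1‖₂ (spectral norm) for all θ_1, θ_2 ∈ R^p; and (iii) f(θ_0) − ỹ ∈ S_+. Run gradient descent θ_{τ+1} = θ_τ − η·J(θ_τ)ᵀ(f(θ_τ) − y) with η ≤ (1/(2β²))·min(1, αβ/(L‖r_0‖₂)). Then: every iterate satisfies ‖θ_τ − θ_0‖₂ ≤ 4‖r_0‖₂/α; and for any precision ν ≥ ‖Π_{S_+}(e)‖_∞,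 after τ ≥ (5/(ηα²))·log(‖r_0‖₂/ν) iterations one has ‖f(θ_τ) − ỹ‖_∞ ≤ 2ν. -/
open MeasureTheory Metric

noncomputable section

/-- Entrywise sup norm on Euclidean space. -/
def linfE {n : ℕ} (v : EuclideanSpace ℝ (Fin n)) : ℝ := ⨆ i, |v i|

section
open intervalIntegral

lemma linfE_nonneg {n : ℕ} (v : EuclideanSpace ℝ (Fin n)) : 0 ≤ linfE v :=
  Real.iSup_nonneg fun i => abs_nonneg _

lemma linfE_le_norm {n : ℕ} (v : EuclideanSpace ℝ (Fin n)) : linfE v ≤ ‖v‖ := by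
  apply Real.iSup_le _ (norm_nonneg v)
  intro i
  have h1 : ‖v‖ = Real.sqrt (∑ j, ‖v j‖ ^ 2) := EuclideanSpace.norm_eq v
  have h2 : |v i| = Real.sqrt (‖v i‖ ^ 2) := by
    rw [Real.sqrt_sq_eq_abs, Real.norm_eq_abs, abs_abs]
  rw [h1, h2]
  exact Real.sqrt_le_sqrt (Finset.single_le_sum (f := fun j => ‖v j‖ ^ 2)
    (fun j _ => sq_nonneg _) (Finset.mem_univ i))

lemma linfE_add {n : ℕ} (a b : EuclideanSpace ℝ (Fin n)) :
    linfE (a + b) ≤ linfE a + linfE b := by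
  apply Real.iSup_le _ (add_nonneg (linfE_nonneg a) (linfE_nonneg b))
  intro i
  have h : (a + b) i = a i + b i := rfl
  rw [h]
  have ha : |a i| ≤ ⨆ j, |a j| :=
    le_ciSup (f := fun j => |a j|) (Set.Finite.bddAbove (Set.finite_range _)) i
  have hb : |b i| ≤ ⨆ j, |b j| :=
    le_ciSup (f := fun j => |b j|) (Set.Finite.bddAbove (Set.finite_range _)) i
  calc |a i + b i| ≤ |a i| + |b i| := abs_add_le _ _
    _ ≤ linfE a + linfE b := add_le_add ha hb

section FTC
variable {p n : ℕ}
  (f : EuclideanSpace ℝ (Fin p) → EuclideanSpace ℝ (Fin n))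
  (J : EuclideanSpace ℝ (Fin p) → (EuclideanSpace ℝ (Fin p) →L[ℝ] EuclideanSpace ℝ (Fin n)))

lemma gd_path_deriv (hJ : ∀ θ, HasFDerivAt f (J θ) θ) (a b : EuclideanSpace ℝ (Fin p)) (t : ℝ) :
    HasDerivAt (fun t : ℝ => f (a + t • (b - a))) ((J (a + t • (b - a))) (b - a)) t := by
  have h1 : HasDerivAt (fun t : ℝ => a + t • (b - a)) (b - a) t := by
    simpa using ((hasDerivAt_id t).smul_const (b - a)).const_add a
  exact (hJ _).comp_hasDerivAt t h1

lemma gd_ftc (hJ : ∀ θ, HasFDerivAt f (J θ) θ) (hJc : Continuous J)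
    (a b : EuclideanSpace ℝ (Fin p)) :
    f b - f a = ∫ t in (0:ℝ)..1, (J (a + t • (b - a))) (b - a) := by
  have hint : IntervalIntegrable (fun t : ℝ => (J (a + t • (b - a))) (b - a)) volume 0 1 := by
    apply Continuous.intervalIntegrable
    exact (hJc.comp (by continuity)).clm_apply continuous_const
  have := intervalIntegral.integral_eq_sub_of_hasDerivAt
    (f := fun t : ℝ => f (a + t • (b - a)))
    (fun t _ => gd_path_deriv f J hJ a b t) hint
  simp only [one_smul, zero_smul, add_zero, add_sub_cancel] at this
  exact this.symm

lemma gd_taylor (hJ : ∀ θ, HasFDerivAt f (J θ) θ) (hJc : Continuous J)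
    {L : ℝ} (hL : 0 ≤ L)
    (hsmooth : ∀ θ1 θ2 : EuclideanSpace ℝ (Fin p), ‖J θ2 - J θ1‖ ≤ L * ‖θ2 - θ1‖)
    (a b : EuclideanSpace ℝ (Fin p)) :
    ‖f b - f a - (J a) (b - a)‖ ≤ L / 2 * ‖b - a‖ ^ 2 := by
  have hint : IntervalIntegrable (fun t : ℝ => (J (a + t • (b - a))) (b - a)) volume 0 1 := by
    apply Continuous.intervalIntegrable
    exact (hJc.comp (by continuity)).clm_apply continuous_const
  have heq : f b - f a - (J a) (b - a)
      = ∫ t in (0:ℝ)..1, ((J (a + t • (b - a))) (b - a) - (J a) (b - a)) := by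
    rw [intervalIntegral.integral_sub hint (_root_.intervalIntegrable_const),
      intervalIntegral.integral_const, ← gd_ftc f J hJ hJc a b]
    norm_num
  rw [heq]
  have hb : ‖∫ t in (0:ℝ)..1, ((J (a + t • (b - a))) (b - a) - (J a) (b - a))‖
      ≤ |∫ t in (0:ℝ)..1, L * ‖b - a‖ ^ 2 * t| := by
    apply intervalIntegral.norm_integral_le_abs_of_norm_le
    · filter_upwards [MeasureTheory.ae_restrict_mem measurableSet_uIoc] with t ht
      rw [Set.uIoc_of_le zero_le_one] at ht
      have h1 : (J (a + t • (b - a))) (b - a) - (J a) (b - a) = (J (a + t • (b - a)) - J a) (b - a) := by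
        simp [ContinuousLinearMap.sub_apply]
      rw [h1]
      calc ‖(J (a + t • (b - a)) - J a) (b - a)‖ ≤ ‖J (a + t • (b - a)) - J a‖ * ‖b - a‖ :=
            ContinuousLinearMap.le_opNorm _ _
        _ ≤ (L * ‖(a + t • (b - a)) - a‖) * ‖b - a‖ :=
            mul_le_mul_of_nonneg_right (hsmooth a _) (norm_nonneg (b - a))
        _ = L * ‖b - a‖ ^ 2 * t := by
            rw [add_sub_cancel_left, norm_smul, Real.norm_eq_abs, abs_of_pos ht.1]
            ring
    · apply Continuous.intervalIntegrable; continuity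
  have hcalc : (∫ t in (0:ℝ)..1, L * ‖b - a‖ ^ 2 * t) = L / 2 * ‖b - a‖ ^ 2 := by
    rw [intervalIntegral.integral_const_mul, integral_id]
    ring
  rw [hcalc] at hb
  calc ‖∫ t in (0:ℝ)..1, ((J (a + t • (b - a))) (b - a) - (J a) (b - a))‖ ≤ |L / 2 * ‖b - a‖ ^ 2| := hb
    _ = L / 2 * ‖b - a‖ ^ 2 := abs_of_nonneg (by positivity)

lemma gd_orth (hJ : ∀ θ, HasFDerivAt f (J θ) θ)
    (a b : EuclideanSpace ℝ (Fin p)) (w : EuclideanSpace ℝ (Fin n))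
    (hw : ∀ t ∈ Set.Icc (0:ℝ) 1, ((J (a + t • (b - a))).adjoint) w = 0) :
    inner ℝ w (f b - f a) = (0:ℝ) := by
  have hder : ∀ t ∈ Set.uIcc (0:ℝ) 1,
      HasDerivAt (fun t : ℝ => (inner ℝ w (f (a + t • (b - a))) : ℝ)) 0 t := by
    intro t ht
    rw [Set.uIcc_of_le zero_le_one] at ht
    have h1 := gd_path_deriv f J hJ a b t
    have h2 : HasDerivAt (fun t : ℝ => (inner ℝ w (f (a + t • (b - a))) : ℝ))
        (inner ℝ w ((J (a + t • (b - a))) (b - a)) : ℝ) t :=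
      ((innerSL ℝ w).hasFDerivAt.comp_hasDerivAt t h1)
    have h3 : (inner ℝ w ((J (a + t • (b - a))) (b - a)) : ℝ) = 0 := by
      rw [← ContinuousLinearMap.adjoint_inner_left, hw t ht, inner_zero_left]
    rwa [h3] at h2
  have hFTC := intervalIntegral.integral_eq_sub_of_hasDerivAt hder
    (_root_.intervalIntegrable_const (c := (0:ℝ)))
  simp only [intervalIntegral.integral_zero, one_smul, zero_smul, add_zero,
    add_sub_cancel] at hFTC
  have : (inner ℝ w (f b) : ℝ) - inner ℝ w (f a) = 0 := by linarith [hFTC.symm]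
  rw [inner_sub_right]
  linarith [this]

end FTC


end

set_option maxHeartbeats 4000000

/-- Meta-theorem: gradient descent with label corruption under a
low-rank Jacobian. -/
theorem gradient_descent_label_corruption
    {p n : ℕ}
    (f : EuclideanSpace ℝ (Fin p) → EuclideanSpace ℝ (Fin n))
    (J : EuclideanSpace ℝ (Fin p) → (EuclideanSpace ℝ (Fin p) →L[ℝ] EuclideanSpace ℝ (Fin n)))
    (hJ : ∀ θ, HasFDerivAt f (J θ) θ)
    (y ytil : EuclideanSpace ℝ (Fin n))
    (Splus : Submodule ℝ (EuclideanSpace ℝ (Fin n)))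
    (θ0 : EuclideanSpace ℝ (Fin p)) (α β L η : ℝ)
    (hα : 0 < α) (hβ : α ≤ β) (hL : 0 < L)
    -- (i) low-rank Jacobian over the ball of radius 4‖r₀‖/α around θ₀
    (hlow : ∀ θ ∈ closedBall θ0 (4 * ‖f θ0 - y‖ / α),
      ∀ u : EuclideanSpace ℝ (Fin n), u ∈ Splus → ‖u‖ = 1 →
        α ≤ ‖(J θ).adjoint u‖ ∧ ‖(J θ).adjoint u‖ ≤ β)
    (hnull : ∀ θ ∈ closedBall θ0 (4 * ‖f θ0 - y‖ / α),
      ∀ w : EuclideanSpace ℝ (Fin n), w ∈ Splusᗮ → ‖(J θ).adjoint w‖ = 0)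
    -- (ii) smoothness of the Jacobian
    (hsmooth : ∀ θ1 θ2 : EuclideanSpace ℝ (Fin p), ‖J θ2 - J θ1‖ ≤ L * ‖θ2 - θ1‖)
    -- (iii) the initial clean residual lies on the signal subspace
    (hinit : f θ0 - ytil ∈ Splus)
    -- step size
    (hη : 0 < η) (hηle : η ≤ 1 / (2 * β ^ 2) * min 1 (α * β / (L * ‖f θ0 - y‖)))
    -- gradient descent iterates
    (θseq : ℕ → EuclideanSpace ℝ (Fin p))
    (hθ0 : θseq 0 = θ0)
    (hstep : ∀ τ : ℕ, θseq (τ + 1) = θseq τ - η • (J (θseq τ)).adjoint (f (θseq τ) - y)) :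
    -- conclusion: all iterates stay close to the initialization, and after enough
    -- iterations the residual w.r.t. the uncorrupted labels is uniformly small
    (∀ τ : ℕ, ‖θseq τ - θ0‖ ≤ 4 * ‖f θ0 - y‖ / α) ∧
    (∀ ν : ℝ, 0 < ν →
      linfE (Splus.orthogonalProjectionOnto (y - ytil) : EuclideanSpace ℝ (Fin n)) ≤ ν →
      ∀ τ : ℕ, 5 / (η * α ^ 2) * Real.log (‖f θ0 - y‖ / ν) ≤ (τ : ℝ) →
        linfE (f (θseq τ) - ytil) ≤ 2 * ν) := by
  have hβ0 : 0 < β := lt_of_lt_of_le hα hβ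
  set R := ‖f θ0 - y‖ with hRdef
  -- R > 0
  have hR : 0 < R := by
    rcases lt_or_eq_of_le (norm_nonneg (f θ0 - y)) with h | h
    · exact h
    · exfalso
      rw [← hRdef] at h
      rw [← h, mul_zero, div_zero, min_eq_right (zero_le_one), mul_zero] at hηle
      linarith
  -- step size consequences
  have hη1 : η * β ^ 2 ≤ 1 / 2 := by
    have hm := le_trans hηle (mul_le_mul_of_nonneg_left (min_le_left _ _) (by positivity))
    rw [mul_one, le_div_iff₀ (by positivity)] at hm
    linarith
  have hηL : 2 * β * (L * (η * R)) ≤ α := by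
    have hm := le_trans hηle (mul_le_mul_of_nonneg_left (min_le_right 1 (α * β / (L * R)))
      (by positivity : (0:ℝ) ≤ 1 / (2 * β ^ 2)))
    have heq : 1 / (2 * β ^ 2) * (α * β / (L * R)) = α / (2 * β * (L * R)) := by
      field_simp
    rw [heq, le_div_iff₀ (by positivity)] at hm
    nlinarith [hm]
  have hηα : η * α ^ 2 ≤ 1 / 2 := by
    have h1 : α ^ 2 ≤ β ^ 2 := by nlinarith [hα.le, hβ]
    have h2 : η * α ^ 2 ≤ η * β ^ 2 := mul_le_mul_of_nonneg_left h1 hη.le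
    linarith
  -- continuity of J
  have hJc : Continuous J := by
    have : LipschitzWith (Real.toNNReal L) J := by
      apply LipschitzWith.of_dist_le_mul
      intro x z
      rw [dist_eq_norm, dist_eq_norm, Real.coe_toNNReal L hL.le]
      exact hsmooth z x
    exact this.continuous
  -- residual decomposition
  set ep : EuclideanSpace ℝ (Fin n) :=
    (Splus.orthogonalProjectionOnto (y - ytil) : EuclideanSpace ℝ (Fin n)) with hep
  set s : ℕ → EuclideanSpace ℝ (Fin n) := fun τ => f (θseq τ) - ytil - ep with hs
  have hepS : ep ∈ Splus := SetLike.coe_mem _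
  have hs0R : ‖s 0‖ ≤ R := by
    have h1 : f θ0 - y = (f θ0 - ytil) - (y - ytil) := by abel
    have h2 : (Splus.orthogonalProjectionOnto (f θ0 - y) : EuclideanSpace ℝ (Fin n)) = s 0 := by
      have h3 : s 0 = f θ0 - ytil - ep := by rw [hs]; simp [hθ0]
      rw [h3, h1, map_sub, Submodule.coe_sub, (show (Splus.orthogonalProjectionOnto (f θ0 - ytil) : EuclideanSpace ℝ (Fin n)) = f θ0 - ytil from Submodule.starProjection_eq_self_iff.mpr hinit), hep]
    rw [← h2]
    calc ‖(Splus.orthogonalProjectionOnto (f θ0 - y) : EuclideanSpace ℝ (Fin n))‖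
        = ‖Splus.orthogonalProjectionOnto (f θ0 - y)‖ := rfl
      _ ≤ ‖Splus.orthogonalProjectionOnto‖ * ‖f θ0 - y‖ := ContinuousLinearMap.le_opNorm _ _
      _ ≤ 1 * ‖f θ0 - y‖ :=
          mul_le_mul_of_nonneg_right (Submodule.orthogonalProjectionOnto_norm_le _) (norm_nonneg _)
      _ = R := one_mul _
  -- adjoint bounds
  have hadj_plus : ∀ θ : EuclideanSpace ℝ (Fin p), ‖θ - θ0‖ ≤ 4 * R / α →
      ∀ u ∈ Splus, α * ‖u‖ ≤ ‖(J θ).adjoint u‖ ∧ ‖(J θ).adjoint u‖ ≤ β * ‖u‖ := by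
    intro θ hθ u hu
    rcases eq_or_ne u 0 with rfl | h0
    · simp
    · have hupos : 0 < ‖u‖ := norm_pos_iff.mpr h0
      have hmem : θ ∈ closedBall θ0 (4 * R / α) := mem_closedBall_iff_norm.mpr hθ
      have hnorm1 : ‖(‖u‖⁻¹ • u)‖ = 1 := by
        rw [norm_smul, norm_inv, norm_norm, inv_mul_cancel₀ hupos.ne']
      have h1 := hlow θ hmem (‖u‖⁻¹ • u) (Submodule.smul_mem _ _ hu) hnorm1
      rw [_root_.map_smul, norm_smul, norm_inv, norm_norm] at h1
      obtain ⟨h1a, h1b⟩ := h1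
      constructor
      · have := mul_le_mul_of_nonneg_right h1a hupos.le
        rw [mul_comm α ‖u‖] at this ⊢
        calc ‖u‖ * α ≤ ‖u‖⁻¹ * ‖(J θ).adjoint u‖ * ‖u‖ := by linarith [this]
          _ = ‖(J θ).adjoint u‖ := by field_simp
      · have := mul_le_mul_of_nonneg_right h1b hupos.le
        calc ‖(J θ).adjoint u‖ = ‖u‖⁻¹ * ‖(J θ).adjoint u‖ * ‖u‖ := by field_simp
          _ ≤ β * ‖u‖ := this
  have hadj_all : ∀ θ : EuclideanSpace ℝ (Fin p), ‖θ - θ0‖ ≤ 4 * R / α →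
      ∀ v, ‖(J θ).adjoint v‖ ≤ β * ‖v‖ := by
    intro θ hθ v
    have hmem : θ ∈ closedBall θ0 (4 * R / α) := mem_closedBall_iff_norm.mpr hθ
    have hz : ‖(J θ).adjoint (v - Splus.orthogonalProjectionOnto v)‖ = 0 :=
      hnull θ hmem _ (Splus.sub_starProjection_mem_orthogonal v)
    have hsplit : (J θ).adjoint v
        = (J θ).adjoint (Splus.orthogonalProjectionOnto v : EuclideanSpace ℝ (Fin n))
          + (J θ).adjoint (v - Splus.orthogonalProjectionOnto v) := by
      rw [← map_add]
      congr 1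
      abel
    calc ‖(J θ).adjoint v‖
        ≤ ‖(J θ).adjoint (Splus.orthogonalProjectionOnto v : EuclideanSpace ℝ (Fin n))‖
          + ‖(J θ).adjoint (v - Splus.orthogonalProjectionOnto v)‖ := by
            rw [hsplit]; exact norm_add_le _ _
      _ = ‖(J θ).adjoint (Splus.orthogonalProjectionOnto v : EuclideanSpace ℝ (Fin n))‖ := by
            rw [hz, add_zero]
      _ ≤ β * ‖(Splus.orthogonalProjectionOnto v : EuclideanSpace ℝ (Fin n))‖ :=
            (hadj_plus θ hθ _ (SetLike.coe_mem _)).2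
      _ ≤ β * ‖v‖ := by
            apply mul_le_mul_of_nonneg_left _ hβ0.le
            calc ‖(Splus.orthogonalProjectionOnto v : EuclideanSpace ℝ (Fin n))‖
                = ‖Splus.orthogonalProjectionOnto v‖ := rfl
              _ ≤ ‖Splus.orthogonalProjectionOnto‖ * ‖v‖ := ContinuousLinearMap.le_opNorm _ _
              _ ≤ 1 * ‖v‖ := mul_le_mul_of_nonneg_right
                  (Submodule.orthogonalProjectionOnto_norm_le _) (norm_nonneg _)
              _ = ‖v‖ := one_mul _
  have hfwd : ∀ θ : EuclideanSpace ℝ (Fin p), ‖θ - θ0‖ ≤ 4 * R / α →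
      ∀ x, ‖(J θ) x‖ ≤ β * ‖x‖ := by
    intro θ hθ x
    rcases eq_or_lt_of_le (norm_nonneg ((J θ) x)) with h | h
    · rw [← h]; positivity
    · have h2 : ‖(J θ) x‖ ^ 2 = inner ℝ x ((J θ).adjoint ((J θ) x)) := by
        rw [ContinuousLinearMap.adjoint_inner_right, real_inner_self_eq_norm_sq]
      have h3 : (inner ℝ x ((J θ).adjoint ((J θ) x)) : ℝ)
          ≤ ‖x‖ * ‖(J θ).adjoint ((J θ) x)‖ := real_inner_le_norm _ _
      have h4 : ‖(J θ).adjoint ((J θ) x)‖ ≤ β * ‖(J θ) x‖ := hadj_all θ hθ _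
      nlinarith [norm_nonneg x, h]
  -- key one-step estimate
  have key : ∀ τ : ℕ, f (θseq τ) - ytil ∈ Splus →
      ‖θseq τ - θ0‖ ≤ 7 / 2 * R / α → ‖s τ‖ ≤ R →
      (f (θseq (τ + 1)) - ytil ∈ Splus) ∧
      ‖s (τ + 1)‖ ^ 2 ≤ ‖s τ‖ ^ 2 - 31 / 32 * η * ‖(J (θseq τ)).adjoint (s τ)‖ ^ 2 ∧
      ‖θseq (τ + 1) - θseq τ‖ = η * ‖(J (θseq τ)).adjoint (s τ)‖ := by
    intro τ ih1 hb1' hsuR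
    have hb1 : ‖θseq τ - θ0‖ ≤ 4 * R / α := by
      calc ‖θseq τ - θ0‖ ≤ 7 / 2 * R / α := hb1'
        _ ≤ 4 * R / α := by gcongr <;> linarith [hR]
    have hsτ : s τ = f (θseq τ) - ytil - ep := by rw [hs]
    have huS : s τ ∈ Splus := by rw [hsτ]; exact Submodule.sub_mem _ ih1 hepS
    set g := ‖(J (θseq τ)).adjoint (s τ)‖ with hg
    have hgα : α * ‖s τ‖ ≤ g := (hadj_plus _ hb1 _ huS).1
    have hgβ : g ≤ β * ‖s τ‖ := (hadj_plus _ hb1 _ huS).2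
    have hgnn : 0 ≤ g := norm_nonneg _
    have hmem2 : (y - ytil) - ep ∈ Splusᗮ := by
      rw [hep]; exact Splus.sub_starProjection_mem_orthogonal (y - ytil)
    have hJr : (J (θseq τ)).adjoint (f (θseq τ) - y) = (J (θseq τ)).adjoint (s τ) := by
      have hdecomp : f (θseq τ) - y = s τ - ((y - ytil) - ep) := by rw [hsτ]; abel
      rw [hdecomp, map_sub,
        norm_eq_zero.mp (hnull _ (mem_closedBall_iff_norm.mpr hb1) _ hmem2), sub_zero]
    have hdval : θseq (τ + 1) - θseq τ = -(η • (J (θseq τ)).adjoint (s τ)) := by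
      rw [hstep τ, hJr]; abel
    have hdn : ‖θseq (τ + 1) - θseq τ‖ = η * g := by
      rw [hdval, norm_neg, norm_smul, Real.norm_eq_abs, abs_of_pos hη, hg]
    have hb2 : ‖θseq (τ + 1) - θ0‖ ≤ 4 * R / α := by
      have htri := norm_add_le (θseq (τ + 1) - θseq τ) (θseq τ - θ0)
      rw [sub_add_sub_cancel] at htri
      have h7 : η * α * β ≤ 1 / 2 := by
        nlinarith [mul_nonneg (mul_nonneg (sub_nonneg.mpr hβ) hη.le) hβ0.le, hη1]
      have hsmall : η * g ≤ 1 / 2 * R / α := by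
        have h8 : η * g ≤ η * (β * R) := by
          apply mul_le_mul_of_nonneg_left _ hη.le
          calc g ≤ β * ‖s τ‖ := hgβ
            _ ≤ β * R := mul_le_mul_of_nonneg_left hsuR hβ0.le
        have h9 : η * (β * R) * α ≤ 1 / 2 * R := by nlinarith [h7, hR.le]
        rw [le_div_iff₀ hα]
        nlinarith [h8, hα.le]
      have h12 : ‖θseq (τ + 1) - θ0‖ ≤ η * g + 7 / 2 * R / α := by
        rw [hdn] at htri
        linarith [htri]
      have h13 : 1 / 2 * R / α + 7 / 2 * R / α = 4 * R / α := by ring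
      linarith [h12, hsmall, h13]
    have hseg : ∀ t ∈ Set.Icc (0:ℝ) 1,
        ‖(θseq τ + t • (θseq (τ + 1) - θseq τ)) - θ0‖ ≤ 4 * R / α := by
      intro t ht
      have hcomb : (θseq τ + t • (θseq (τ + 1) - θseq τ)) - θ0
          = (1 - t) • (θseq τ - θ0) + t • (θseq (τ + 1) - θ0) := by module
      rw [hcomb]
      calc ‖(1 - t) • (θseq τ - θ0) + t • (θseq (τ + 1) - θ0)‖
          ≤ ‖(1 - t) • (θseq τ - θ0)‖ + ‖t • (θseq (τ + 1) - θ0)‖ := norm_add_le _ _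
        _ = (1 - t) * ‖θseq τ - θ0‖ + t * ‖θseq (τ + 1) - θ0‖ := by
            rw [norm_smul, norm_smul, Real.norm_eq_abs, Real.norm_eq_abs,
              abs_of_nonneg (by linarith [ht.2]), abs_of_nonneg ht.1]
        _ ≤ (1 - t) * (4 * R / α) + t * (4 * R / α) := by
            have h1 : (0:ℝ) ≤ 1 - t := by linarith [ht.2]
            exact add_le_add (mul_le_mul_of_nonneg_left hb1 h1)
              (mul_le_mul_of_nonneg_left hb2 ht.1)
        _ = 4 * R / α := by ring
    have hI1b : f (θseq (τ + 1)) - ytil ∈ Splus := by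
      have hdiff : f (θseq (τ + 1)) - f (θseq τ) ∈ Splusᗮᗮ := by
        rw [Submodule.mem_orthogonal]
        intro w hw
        apply gd_orth f J hJ
        intro t ht
        exact norm_eq_zero.mp (hnull _ (mem_closedBall_iff_norm.mpr (hseg t ht)) w hw)
      rw [Submodule.orthogonal_orthogonal] at hdiff
      have heq2 : f (θseq (τ + 1)) - ytil
          = (f (θseq τ) - ytil) + (f (θseq (τ + 1)) - f (θseq τ)) := by abel
      rw [heq2]
      exact Submodule.add_mem _ ih1 hdiff
    have hsb : s (τ + 1) = s τ + (f (θseq (τ + 1)) - f (θseq τ)) := by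
      rw [hs]; simp only; abel
    set E := f (θseq (τ + 1)) - f (θseq τ) - (J (θseq τ)) (θseq (τ + 1) - θseq τ) with hE
    set A := s τ - η • ((J (θseq τ)) ((J (θseq τ)).adjoint (s τ))) with hA
    have hTay : ‖E‖ ≤ L / 2 * (η * g) ^ 2 := by
      rw [hE, ← hdn]
      exact gd_taylor f J hJ hJc hL.le hsmooth _ _
    have hEdef : s (τ + 1) = A + E := by
      rw [hsb, hA, hE]
      have h1 : (J (θseq τ)) (θseq (τ + 1) - θseq τ)
          = -(η • (J (θseq τ)) ((J (θseq τ)).adjoint (s τ))) := by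
        rw [hdval, map_neg, _root_.map_smul]
      rw [h1]; abel
    have hip : (inner ℝ (s τ) ((J (θseq τ)) ((J (θseq τ)).adjoint (s τ))) : ℝ) = g ^ 2 := by
      rw [← ContinuousLinearMap.adjoint_inner_left, real_inner_self_eq_norm_sq, hg]
    have hA2 : ‖A‖ ^ 2 = ‖s τ‖ ^ 2 - 2 * η * g ^ 2
        + η ^ 2 * ‖(J (θseq τ)) ((J (θseq τ)).adjoint (s τ))‖ ^ 2 := by
      rw [hA, norm_sub_sq_real, real_inner_smul_right, hip, norm_smul, Real.norm_eq_abs,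
        abs_of_pos hη, mul_pow]
      ring
    have hJJle : ‖(J (θseq τ)) ((J (θseq τ)).adjoint (s τ))‖ ≤ β * g := hfwd _ hb1 _
    have hA2le : ‖A‖ ^ 2 ≤ ‖s τ‖ ^ 2 - 3 / 2 * η * g ^ 2 := by
      have hsq : ‖(J (θseq τ)) ((J (θseq τ)).adjoint (s τ))‖ ^ 2 ≤ (β * g) ^ 2 :=
        pow_le_pow_left₀ (norm_nonneg _) hJJle 2
      linarith [hA2, mul_le_mul_of_nonneg_left hsq (sq_nonneg η),
        mul_le_mul_of_nonneg_right hη1 (mul_nonneg hη.le (sq_nonneg g))]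
    have hAn : ‖A‖ ≤ ‖s τ‖ := by
      nlinarith [hA2le, norm_nonneg A, norm_nonneg (s τ),
        mul_nonneg (mul_nonneg (by norm_num : (0:ℝ) ≤ 3 / 2) hη.le) (sq_nonneg g)]
    have hgR : g ≤ β * R := le_trans hgβ (mul_le_mul_of_nonneg_left hsuR hβ0.le)
    have hEle : ‖E‖ ≤ η * α / 4 * g := by
      calc ‖E‖ ≤ L / 2 * (η * g) ^ 2 := hTay
        _ = L * η ^ 2 * g / 2 * g := by ring
        _ ≤ L * η ^ 2 * (β * R) / 2 * g := by
            apply mul_le_mul_of_nonneg_right _ hgnn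
            have h11 := mul_le_mul_of_nonneg_left hgR (by positivity : (0:ℝ) ≤ L * η ^ 2)
            linarith
        _ = η * (2 * β * (L * (η * R))) / 4 * g := by ring
        _ ≤ η * α / 4 * g := by
            apply mul_le_mul_of_nonneg_right _ hgnn
            have h10 := mul_le_mul_of_nonneg_left hηL hη.le
            linarith
    have hcross : 2 * ‖A‖ * ‖E‖ ≤ η / 2 * g ^ 2 := by
      calc 2 * ‖A‖ * ‖E‖ ≤ 2 * ‖s τ‖ * (η * α / 4 * g) := by
            apply mul_le_mul (by linarith [hAn]) hEle (norm_nonneg E)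
            positivity
        _ = η / 2 * (α * ‖s τ‖) * g := by ring
        _ ≤ η / 2 * g * g := by
            apply mul_le_mul_of_nonneg_right _ hgnn
            exact mul_le_mul_of_nonneg_left hgα (by positivity)
        _ = η / 2 * g ^ 2 := by ring
    have hEsq : ‖E‖ ^ 2 ≤ η / 32 * g ^ 2 := by
      have h1 : ‖E‖ ^ 2 ≤ (η * α / 4 * g) ^ 2 := pow_le_pow_left₀ (norm_nonneg _) hEle 2
      linarith [h1, mul_le_mul_of_nonneg_right
        (mul_le_mul_of_nonneg_left hηα hη.le) (sq_nonneg g)]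
    have hfin : ‖s (τ + 1)‖ ^ 2 ≤ ‖s τ‖ ^ 2 - 31 / 32 * η * g ^ 2 := by
      have h1 : ‖s (τ + 1)‖ ≤ ‖A‖ + ‖E‖ := by rw [hEdef]; exact norm_add_le _ _
      have h2 : ‖s (τ + 1)‖ ^ 2 ≤ (‖A‖ + ‖E‖) ^ 2 :=
        pow_le_pow_left₀ (norm_nonneg _) h1 2
      have h3 : (‖A‖ + ‖E‖) ^ 2 = ‖A‖ ^ 2 + 2 * ‖A‖ * ‖E‖ + ‖E‖ ^ 2 := by ring
      linarith [hA2le, hcross, hEsq]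
    exact ⟨hI1b, hfin, hdn⟩
  -- main induction
  have main : ∀ τ : ℕ, (f (θseq τ) - ytil ∈ Splus) ∧
      (‖θseq τ - θ0‖ + 64 / (31 * α) * ‖s τ‖ ≤ 64 / (31 * α) * ‖s 0‖) ∧
      (‖s τ‖ ^ 2 ≤ (1 - 31 / 32 * η * α ^ 2) ^ τ * ‖s 0‖ ^ 2) := by
    have hq0 : (0:ℝ) ≤ 1 - 31 / 32 * η * α ^ 2 := by linarith [hηα]
    have hq1 : 1 - 31 / 32 * η * α ^ 2 ≤ 1 := by
      have := mul_nonneg hη.le (sq_nonneg α); linarith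
    have hcoeff : (0:ℝ) < 64 / (31 * α) := by positivity
    intro τ
    induction τ with
    | zero =>
      refine ⟨by rw [hθ0]; exact hinit, ?_, by simp⟩
      rw [hθ0, sub_self, norm_zero, zero_add]
    | succ τ ih =>
      obtain ⟨ih1, ih2, ih3⟩ := ih
      have hqτ : (1 - 31 / 32 * η * α ^ 2) ^ τ ≤ 1 := pow_le_one₀ hq0 hq1
      have hs2 : ‖s τ‖ ^ 2 ≤ ‖s 0‖ ^ 2 :=
        le_trans ih3 (mul_le_of_le_one_left (sq_nonneg _) hqτ)
      have hsle0 : ‖s τ‖ ≤ ‖s 0‖ := by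
        nlinarith [norm_nonneg (s τ), norm_nonneg (s 0)]
      have hsuR : ‖s τ‖ ≤ R := le_trans hsle0 hs0R
      have hb1' : ‖θseq τ - θ0‖ ≤ 7 / 2 * R / α := by
        have h1 : ‖θseq τ - θ0‖ ≤ 64 / (31 * α) * ‖s 0‖ := by
          linarith [ih2, mul_nonneg hcoeff.le (norm_nonneg (s τ))]
        have h2 : 64 / (31 * α) * ‖s 0‖ ≤ 64 / (31 * α) * R :=
          mul_le_mul_of_nonneg_left hs0R hcoeff.le
        have h3 : 64 / (31 * α) * R ≤ 7 / 2 * R / α := by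
          rw [div_mul_eq_mul_div, div_mul_eq_mul_div, div_le_div_iff₀ (by positivity) hα]
          nlinarith [hR.le, hα.le]
        linarith
      have hb1 : ‖θseq τ - θ0‖ ≤ 4 * R / α := by
        calc ‖θseq τ - θ0‖ ≤ 7 / 2 * R / α := hb1'
          _ ≤ 4 * R / α := by gcongr <;> linarith [hR]
      obtain ⟨k1, k2, k3⟩ := key τ ih1 hb1' hsuR
      set g := ‖(J (θseq τ)).adjoint (s τ)‖ with hg
      have hgnn : (0:ℝ) ≤ g := norm_nonneg _
      have hsτS : s τ ∈ Splus := by rw [hs]; exact Submodule.sub_mem _ ih1 hepS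
      have hgα : α * ‖s τ‖ ≤ g := (hadj_plus _ hb1 _ hsτS).1
      have hsn : ‖s (τ + 1)‖ ≤ ‖s τ‖ := by
        nlinarith [k2, norm_nonneg (s (τ + 1)), norm_nonneg (s τ),
          mul_nonneg (mul_nonneg (by norm_num : (0:ℝ) ≤ 31 / 32) hη.le) (sq_nonneg g)]
      refine ⟨k1, ?_, ?_⟩
      · have hdec : η * g ≤ 64 / (31 * α) * (‖s τ‖ - ‖s (τ + 1)‖) := by
          rcases eq_or_lt_of_le hgnn with h0 | hgpos
          · rw [← h0, mul_zero]
            apply mul_nonneg hcoeff.le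
            linarith [hsn]
          · have h5 : 31 / 32 * η * g ^ 2
                ≤ (‖s τ‖ - ‖s (τ + 1)‖) * (‖s τ‖ + ‖s (τ + 1)‖) := by nlinarith [k2]
            have h6 : α * (‖s τ‖ + ‖s (τ + 1)‖) ≤ 2 * g := by
              have := mul_le_mul_of_nonneg_left hsn hα.le
              linarith [hgα]
            rw [div_mul_eq_mul_div, le_div_iff₀ (by positivity : (0:ℝ) < 31 * α)]
            nlinarith [mul_le_mul_of_nonneg_left h6
                (by linarith [hsn] : (0:ℝ) ≤ ‖s τ‖ - ‖s (τ + 1)‖),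
              mul_le_mul_of_nonneg_left h5 hα.le, hgpos]
        have htri := norm_add_le (θseq (τ + 1) - θseq τ) (θseq τ - θ0)
        rw [sub_add_sub_cancel, k3] at htri
        linarith [ih2, hdec, htri]
      · have hg2 : α ^ 2 * ‖s τ‖ ^ 2 ≤ g ^ 2 := by
          nlinarith [hgα, mul_nonneg hα.le (norm_nonneg (s τ)), hgnn]
        have hstep2 : ‖s (τ + 1)‖ ^ 2 ≤ (1 - 31 / 32 * η * α ^ 2) * ‖s τ‖ ^ 2 := by
          have := mul_le_mul_of_nonneg_left hg2
            (mul_nonneg (by norm_num : (0:ℝ) ≤ 31 / 32) hη.le)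
          nlinarith [k2]
        calc ‖s (τ + 1)‖ ^ 2 ≤ (1 - 31 / 32 * η * α ^ 2) * ‖s τ‖ ^ 2 := hstep2
          _ ≤ (1 - 31 / 32 * η * α ^ 2) * ((1 - 31 / 32 * η * α ^ 2) ^ τ * ‖s 0‖ ^ 2) :=
              mul_le_mul_of_nonneg_left ih3 hq0
          _ = (1 - 31 / 32 * η * α ^ 2) ^ (τ + 1) * ‖s 0‖ ^ 2 := by rw [pow_succ]; ring
  constructor
  · intro τ
    obtain ⟨-, h2, -⟩ := main τ
    have h1 : ‖θseq τ - θ0‖ ≤ 64 / (31 * α) * ‖s 0‖ := by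
      linarith [h2, mul_nonneg (by positivity : (0:ℝ) ≤ 64 / (31 * α)) (norm_nonneg (s τ))]
    have h2' : 64 / (31 * α) * ‖s 0‖ ≤ 64 / (31 * α) * R :=
      mul_le_mul_of_nonneg_left hs0R (by positivity)
    have h3' : 64 / (31 * α) * R ≤ 4 * R / α := by
      rw [div_mul_eq_mul_div, div_le_div_iff₀ (by positivity) hα]
      nlinarith [hR.le, hα.le]
    linarith
  · intro ν hν hνle τ hτ
    have hq0 : (0:ℝ) ≤ 1 - 31 / 32 * η * α ^ 2 := by linarith [hηα]
    have hq1 : 1 - 31 / 32 * η * α ^ 2 ≤ 1 := by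
      have := mul_nonneg hη.le (sq_nonneg α); linarith
    obtain ⟨-, -, h3⟩ := main τ
    have hqτ : (1 - 31 / 32 * η * α ^ 2) ^ τ ≤ 1 := pow_le_one₀ hq0 hq1
    have hs2 : ‖s τ‖ ^ 2 ≤ ‖s 0‖ ^ 2 :=
      le_trans h3 (mul_le_of_le_one_left (sq_nonneg _) hqτ)
    have hsle0 : ‖s τ‖ ≤ ‖s 0‖ := by
      nlinarith [norm_nonneg (s τ), norm_nonneg (s 0)]
    have hsν : ‖s τ‖ ≤ ν := by
      rcases le_or_gt R ν with hcase | hcase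
      · linarith [hs0R]
      · have hlogpos : 0 < Real.log (R / ν) := Real.log_pos (by rw [lt_div_iff₀ hν]; linarith)
        have hpos : (0:ℝ) < η * α ^ 2 := by positivity
        rw [div_mul_eq_mul_div, div_le_iff₀ hpos] at hτ
        have hτ2 : 2 * Real.log (R / ν) ≤ 31 / 32 * η * α ^ 2 * τ := by
          nlinarith [hτ, hlogpos]
        have hqexp : 1 - 31 / 32 * η * α ^ 2 ≤ Real.exp (-(31 / 32 * η * α ^ 2)) := by
          linarith [Real.add_one_le_exp (-(31 / 32 * η * α ^ 2))]
        have h4 : ‖s τ‖ ^ 2 ≤ Real.exp (-(31 / 32 * η * α ^ 2)) ^ τ * R ^ 2 := by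
          calc ‖s τ‖ ^ 2 ≤ (1 - 31 / 32 * η * α ^ 2) ^ τ * ‖s 0‖ ^ 2 := h3
            _ ≤ Real.exp (-(31 / 32 * η * α ^ 2)) ^ τ * R ^ 2 :=
                mul_le_mul (pow_le_pow_left₀ hq0 hqexp τ)
                  (pow_le_pow_left₀ (norm_nonneg _) hs0R 2) (sq_nonneg _)
                  (pow_nonneg (Real.exp_pos _).le τ)
        have h5 : Real.exp (-(31 / 32 * η * α ^ 2)) ^ τ
            = Real.exp (-(31 / 32 * η * α ^ 2) * τ) := by
          rw [← Real.exp_nat_mul]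
          congr 1
          ring
        have h6 : Real.exp (-(31 / 32 * η * α ^ 2) * τ)
            ≤ Real.exp (-(2 * Real.log (R / ν))) := by
          apply Real.exp_le_exp.mpr
          nlinarith [hτ2]
        have h7 : Real.exp (-(2 * Real.log (R / ν))) * R ^ 2 = ν ^ 2 := by
          rw [show -(2 * Real.log (R / ν)) = -Real.log (R / ν) + -Real.log (R / ν) by ring,
            Real.exp_add, Real.exp_neg, Real.exp_log (by positivity)]
          field_simp
        have h8 : ‖s τ‖ ^ 2 ≤ ν ^ 2 := by
          calc ‖s τ‖ ^ 2 ≤ Real.exp (-(31 / 32 * η * α ^ 2)) ^ τ * R ^ 2 := h4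
            _ = Real.exp (-(31 / 32 * η * α ^ 2) * τ) * R ^ 2 := by rw [h5]
            _ ≤ Real.exp (-(2 * Real.log (R / ν))) * R ^ 2 :=
                mul_le_mul_of_nonneg_right h6 (sq_nonneg R)
            _ = ν ^ 2 := h7
        nlinarith [norm_nonneg (s τ), hν.le]
    have hfsplit : f (θseq τ) - ytil = s τ + ep := by rw [hs]; simp only; abel
    rw [hfsplit]
    calc linfE (s τ + ep) ≤ linfE (s τ) + linfE ep := linfE_add _ _
      _ ≤ ‖s τ‖ + ν := add_le_add (linfE_le_norm _) hνle
      _ ≤ 2 * ν := by linarith [hsν]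
end
end

section
/- Let f: R^p → R^n be differentiable with Jacobian J(θ), let y ∈ R^n, θ_0 ∈ R^p, and r_0 = f(θ_0) − y. Let S_+ ⊆ R^n be a subspace with orthogonal complement S_−, and set E_+ = ‖Π_{S_+}(r_0)‖₂ and E_− = ‖Π_{S_−}(r_0)‖₂. Suppose that over a Euclidean ball D of radius R around θ_0 the Jacobian is bimodal with parameters β ≥ α ≥ ε > 0: for all θ ∈ D, α ≤ ‖J(θ)ᵀ v‖₂ ≤ β for every unit v ∈ S_+, and ‖J(θ)ᵀ v‖₂ ≤ ε for every unit v ∈ S_−. If R < max(E_+/β, E_−/ε), then there exists no θ ∈ D with f(θ) = y. In particular, if the bimodal condition holds over D = R^p, then any θ with f(θ) = y satisfies ‖θ − θ_0‖₂ ≥ max(E_+/β, E_−/ε). -/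
open Metric RealInnerProductSpace

noncomputable section

lemma aux_proj_bound {p n : ℕ}
    (f : EuclideanSpace ℝ (Fin p) → EuclideanSpace ℝ (Fin n))
    (J : EuclideanSpace ℝ (Fin p) → (EuclideanSpace ℝ (Fin p) →L[ℝ] EuclideanSpace ℝ (Fin n)))
    (hJ : ∀ θ, HasFDerivAt f (J θ) θ)
    (y : EuclideanSpace ℝ (Fin n))
    (S : Submodule ℝ (EuclideanSpace ℝ (Fin n)))
    (θ0 θ : EuclideanSpace ℝ (Fin p)) (c : ℝ) (hc : 0 ≤ c)
    (hb : ∀ σ ∈ closedBall θ0 ‖θ - θ0‖,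
      ∀ v : EuclideanSpace ℝ (Fin n), v ∈ S → ‖v‖ = 1 → ‖(J σ).adjoint v‖ ≤ c)
    (hfθ : f θ = y) :
    ‖(Submodule.orthogonalProjectionOnto S (f θ0 - y) : EuclideanSpace ℝ (Fin n))‖ ≤ c * ‖θ - θ0‖ := by
  set r0 := f θ0 - y with hr0
  set w : EuclideanSpace ℝ (Fin n) := (Submodule.orthogonalProjectionOnto S r0 : EuclideanSpace ℝ (Fin n))
    with hwdef
  by_cases hw : w = 0
  · rw [hw, norm_zero]; positivity
  · have hwn : 0 < ‖w‖ := norm_pos_iff.mpr hw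
    set v : EuclideanSpace ℝ (Fin n) := ‖w‖⁻¹ • w with hvdef
    have hvS : v ∈ S := S.smul_mem _ (Submodule.orthogonalProjectionOnto S r0).2
    have hv1 : ‖v‖ = 1 := by
      rw [hvdef, norm_smul, norm_inv, norm_norm, inv_mul_cancel₀ hwn.ne']
    set g : EuclideanSpace ℝ (Fin p) → ℝ := fun σ => ⟪v, f σ - y⟫ with hgdef
    have hgderiv : ∀ σ, HasFDerivAt g ((innerSL ℝ v).comp (J σ)) σ := by
      intro σ
      exact (innerSL ℝ v).hasFDerivAt.comp σ ((hJ σ).sub_const y)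
    have hnorm : ∀ σ ∈ closedBall θ0 ‖θ - θ0‖, ‖(innerSL ℝ v).comp (J σ)‖ ≤ c := by
      intro σ hσ
      refine ContinuousLinearMap.opNorm_le_bound _ hc (fun u => ?_)
      have : ((innerSL ℝ v).comp (J σ)) u = ⟪(J σ).adjoint v, u⟫ := by
        simp [ContinuousLinearMap.adjoint_inner_left]
      rw [this]
      calc ‖⟪(J σ).adjoint v, u⟫‖ ≤ ‖(J σ).adjoint v‖ * ‖u‖ := norm_inner_le_norm _ _
        _ ≤ c * ‖u‖ := by
            exact mul_le_mul_of_nonneg_right (hb σ hσ v hvS hv1) (norm_nonneg u)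
    have hconv : Convex ℝ (closedBall θ0 ‖θ - θ0‖) := convex_closedBall _ _
    have hmvt := hconv.norm_image_sub_le_of_norm_hasFDerivWithin_le
      (fun σ hσ => (hgderiv σ).hasFDerivWithinAt) hnorm
      (x := θ0) (y := θ) (by simp) (by simp [mem_closedBall, dist_eq_norm])
    have hgθ : g θ = 0 := by simp [hgdef, hfθ]
    have hgθ0 : g θ0 = ‖w‖ := by
      have h1 : ⟪w, r0⟫ = ‖w‖ ^ 2 := by
        have h0 : ⟪r0 - w, w⟫ = 0 :=
          Submodule.starProjection_inner_eq_zero r0 w (Submodule.orthogonalProjectionOnto S r0).2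
        rw [inner_sub_left, sub_eq_zero] at h0
        rw [real_inner_comm, h0, real_inner_self_eq_norm_sq]
      rw [hgdef]
      simp only [← hr0, hvdef, inner_smul_left, RCLike.conj_to_real]
      rw [h1]
      field_simp [pow_two]
    rw [hgθ, hgθ0, zero_sub, norm_neg, Real.norm_eq_abs, abs_of_nonneg (norm_nonneg w)] at hmvt
    exact hmvt

/-- Overfitting requires straying far from the initialization:
lower bound under a bimodal Jacobian. -/
theorem overfitting_requires_large_distance
    {p n : ℕ}
    (f : EuclideanSpace ℝ (Fin p) → EuclideanSpace ℝ (Fin n))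
    (J : EuclideanSpace ℝ (Fin p) → (EuclideanSpace ℝ (Fin p) →L[ℝ] EuclideanSpace ℝ (Fin n)))
    (hJ : ∀ θ, HasFDerivAt f (J θ) θ)
    (y : EuclideanSpace ℝ (Fin n))
    (Splus : Submodule ℝ (EuclideanSpace ℝ (Fin n)))
    (θ0 : EuclideanSpace ℝ (Fin p)) (α β ε R : ℝ)
    (hε : 0 < ε) (hαε : ε ≤ α) (hβ : α ≤ β)
    -- bimodal Jacobian over the closed ball D of radius R around θ₀
    (hsig : ∀ θ ∈ closedBall θ0 R,
      ∀ u : EuclideanSpace ℝ (Fin n), u ∈ Splus → ‖u‖ = 1 →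
        α ≤ ‖(J θ).adjoint u‖ ∧ ‖(J θ).adjoint u‖ ≤ β)
    (hnoise : ∀ θ ∈ closedBall θ0 R,
      ∀ w : EuclideanSpace ℝ (Fin n), w ∈ Splusᗮ → ‖w‖ = 1 → ‖(J θ).adjoint w‖ ≤ ε) :
    -- first part: if R is too small, no parameter in D achieves zero training loss
    (R < max (‖(Submodule.orthogonalProjectionOnto Splus (f θ0 - y) : EuclideanSpace ℝ (Fin n))‖ / β)
          (‖(Submodule.orthogonalProjectionOnto Splusᗮ (f θ0 - y) : EuclideanSpace ℝ (Fin n))‖ / ε) →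
      ∀ θ ∈ closedBall θ0 R, f θ ≠ y) ∧
    -- second part: if the bimodal condition holds over all of ℝᵖ, any global fit is far away
    ((∀ θ : EuclideanSpace ℝ (Fin p),
        (∀ u : EuclideanSpace ℝ (Fin n), u ∈ Splus → ‖u‖ = 1 →
          α ≤ ‖(J θ).adjoint u‖ ∧ ‖(J θ).adjoint u‖ ≤ β) ∧
        (∀ w : EuclideanSpace ℝ (Fin n), w ∈ Splusᗮ → ‖w‖ = 1 → ‖(J θ).adjoint w‖ ≤ ε)) →
      ∀ θ : EuclideanSpace ℝ (Fin p), f θ = y →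
        max (‖(Submodule.orthogonalProjectionOnto Splus (f θ0 - y) : EuclideanSpace ℝ (Fin n))‖ / β)
            (‖(Submodule.orthogonalProjectionOnto Splusᗮ (f θ0 - y) : EuclideanSpace ℝ (Fin n))‖ / ε) ≤
          ‖θ - θ0‖) := by
  have hβ0 : 0 < β := lt_of_lt_of_le hε (hαε.trans hβ)
  constructor
  · intro hR θ hθ hfθ
    have hsub : closedBall θ0 ‖θ - θ0‖ ⊆ closedBall θ0 R := by
      apply closedBall_subset_closedBall
      rw [← dist_eq_norm]; exact mem_closedBall.mp hθ
    have h1 := aux_proj_bound f J hJ y Splus θ0 θ β hβ0.le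
      (fun σ hσ v hv hv1 => (hsig σ (hsub hσ) v hv hv1).2) hfθ
    have h2 := aux_proj_bound f J hJ y Splusᗮ θ0 θ ε hε.le
      (fun σ hσ v hv hv1 => hnoise σ (hsub hσ) v hv hv1) hfθ
    have hθR : ‖θ - θ0‖ ≤ R := by rw [← dist_eq_norm]; exact mem_closedBall.mp hθ
    have hR1 : ‖(Submodule.orthogonalProjectionOnto Splus (f θ0 - y) : EuclideanSpace ℝ (Fin n))‖ / β ≤ R := by
      rw [div_le_iff₀ hβ0]
      exact h1.trans ((mul_le_mul_of_nonneg_left hθR hβ0.le).trans_eq (mul_comm _ _))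
    have hR2 : ‖(Submodule.orthogonalProjectionOnto Splusᗮ (f θ0 - y) : EuclideanSpace ℝ (Fin n))‖ / ε ≤ R := by
      rw [div_le_iff₀ hε]
      exact h2.trans ((mul_le_mul_of_nonneg_left hθR hε.le).trans_eq (mul_comm _ _))
    exact absurd (max_le hR1 hR2) (not_le.mpr hR)
  · intro hall θ hfθ
    have h1 := aux_proj_bound f J hJ y Splus θ0 θ β hβ0.le
      (fun σ _ v hv hv1 => ((hall σ).1 v hv hv1).2) hfθ
    have h2 := aux_proj_bound f J hJ y Splusᗮ θ0 θ ε hε.le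
      (fun σ _ v hv hv1 => (hall σ).2 v hv hv1) hfθ
    refine max_le ?_ ?_
    · rw [div_le_iff₀ hβ0]; rw [mul_comm] at h1; exact h1
    · rw [div_le_iff₀ hε]; rw [mul_comm] at h2; exact h2
end
end

section
/- Let f: R^p → R^n be differentiable with Jacobian J(θ) ∈ R^{n×p}, y ∈ R^n, and consider a gradient step θ̂ = θ − η∇L(θ) on the loss L(θ) = ½‖f(θ) − y‖₂². Define the average Jacobian along the segment from θ to θ̂ as J(θ̂, θ) = ∫₀¹ J(θ + α(θ̂ − θ)) dα and set C(θ) = J(θ̂, θ)·J(θ)ᵀ ∈ R^{n×n}. Then the residuals r̂ = f(θ̂) − y and r = f(θ) − y satisfy r̂ = (I − η·C(θ))·r. -/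
set_option maxHeartbeats 800000

noncomputable section

/-- Linearization of the residual along one gradient step:
with θ̂ = θ − η∇L(θ) and C(θ) = J(θ̂, θ)·J(θ)ᵀ the product of the average Jacobian
with the adjoint of the Jacobian, the residuals satisfy r̂ = (I − ηC(θ))r. -/
theorem residual_linearization
    {p n : ℕ}
    (f : EuclideanSpace ℝ (Fin p) → EuclideanSpace ℝ (Fin n))
    (J : EuclideanSpace ℝ (Fin p) → (EuclideanSpace ℝ (Fin p) →L[ℝ] EuclideanSpace ℝ (Fin n)))
    (hJ : ∀ θ, HasFDerivAt f (J θ) θ)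
    (hJc : Continuous J)
    (y : EuclideanSpace ℝ (Fin n)) (η : ℝ)
    (θ θhat : EuclideanSpace ℝ (Fin p))
    (hθhat : θhat = θ - η • (J θ).adjoint (f θ - y)) :
    f θhat - y =
      (f θ - y) -
        η • (∫ a in (0:ℝ)..1, J (θ + a • (θhat - θ))) ((J θ).adjoint (f θ - y)) := by
  set v := (J θ).adjoint (f θ - y) with hv
  set d := θhat - θ with hd
  have hdv : d = -(η • v) := by rw [hd, hθhat]; abel
  have hline : ∀ a : ℝ, HasDerivAt (fun a : ℝ => f (θ + a • d)) ((J (θ + a • d)) d) a := by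
    intro a
    have h1 : HasDerivAt (fun a : ℝ => θ + a • d) d a := by
      simpa using ((hasDerivAt_id a).smul_const d).const_add θ
    exact (hJ (θ + a • d)).comp_hasDerivAt a h1
  have hcont : Continuous fun a : ℝ => J (θ + a • d) :=
    hJc.comp (by continuity)
  have hint : IntervalIntegrable (fun a : ℝ => J (θ + a • d)) MeasureTheory.volume 0 1 :=
    hcont.intervalIntegrable 0 1
  have hftc : (∫ a in (0:ℝ)..1, (J (θ + a • d)) d) = f (θ + (1:ℝ) • d) - f (θ + (0:ℝ) • d) := by
    exact intervalIntegral.integral_eq_sub_of_hasDerivAt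
      (f := fun a : ℝ => f (θ + a • d)) (fun a _ => hline a)
      ((hcont.clm_apply continuous_const).intervalIntegrable 0 1)
  have happ : (∫ a in (0:ℝ)..1, J (θ + a • d)) d = ∫ a in (0:ℝ)..1, (J (θ + a • d)) d :=
    ContinuousLinearMap.intervalIntegral_apply hint d
  have key : f θhat - f θ = (∫ a in (0:ℝ)..1, J (θ + a • d)) d := by
    rw [happ, hftc]; simp [hd]
  have : f θhat - f θ = -(η • (∫ a in (0:ℝ)..1, J (θ + a • d)) v) := by
    rw [key, hdv]; simp
  rw [show f θhat - y = (f θ - y) + (f θhat - f θ) by abel, this]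
  abel
end
end

section
/- Let A, C ∈ R^{n×p} be matrices whose column spaces (ranges) are contained in a subspace S_+ ⊆ R^n, let P_{S_+} ∈ R^{n×n} be the orthogonal projection onto S_+, and suppose ‖A − C‖ ≤ α/2 (spectral norm) and C·Cᵀ ⪰ α²·P_{S_+}. Then for every vector r ∈ R^n, rᵀ·A·Cᵀ·r ≥ (1/2)·rᵀ·C·Cᵀ·r ≥ (α²/2)·rᵀ·P_{S_+}·r; that is, A·Cᵀ ⪰ (1/2)·C·Cᵀ ⪰ (α²/2)·P_{S_+} in the quadratic-form sense. -/
noncomputable section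

def l2 {ι : Type*} [Fintype ι] (v : ι → ℝ) : ℝ := Real.sqrt (∑ i, v i ^ 2)

def spec {ι κ : Type*} [Fintype ι] [Fintype κ] (M : ι → κ → ℝ) : ℝ :=
  sSup {r | ∃ v : κ → ℝ, l2 v ≤ 1 ∧ r = l2 fun i => ∑ j, M i j * v j}

/-- Regard a plain vector as an element of Euclidean space. -/
def toE {n : ℕ} (v : Fin n → ℝ) : EuclideanSpace ℝ (Fin n) :=
  (EuclideanSpace.equiv (Fin n) ℝ).symm v

lemma l2_nonneg {ι : Type*} [Fintype ι] (v : ι → ℝ) : 0 ≤ l2 v := Real.sqrt_nonneg _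

lemma l2_sq {ι : Type*} [Fintype ι] (v : ι → ℝ) : l2 v ^ 2 = ∑ i, v i ^ 2 :=
  Real.sq_sqrt (Finset.sum_nonneg fun _ _ => sq_nonneg _)

lemma l2_zero {ι : Type*} [Fintype ι] : l2 (fun _ : ι => (0:ℝ)) = 0 := by
  simp [l2]

lemma l2_smul {ι : Type*} [Fintype ι] {c : ℝ} (hc : 0 ≤ c) (v : ι → ℝ) :
    l2 (fun i => c * v i) = c * l2 v := by
  unfold l2
  rw [show ∑ i, (c * v i)^2 = c^2 * ∑ i, v i ^2 by
    rw [Finset.mul_sum]; exact Finset.sum_congr rfl fun i _ => by ring]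
  rw [Real.sqrt_mul (sq_nonneg c), Real.sqrt_sq hc]

lemma spec_bddAbove {ι κ : Type*} [Fintype ι] [Fintype κ] (M : ι → κ → ℝ) :
    BddAbove {r | ∃ v : κ → ℝ, l2 v ≤ 1 ∧ r = l2 fun i => ∑ j, M i j * v j} := by
  refine ⟨Real.sqrt (∑ i, ∑ j, M i j ^ 2), ?_⟩
  rintro r ⟨v, hv, rfl⟩
  have hv2 : ∑ j, v j ^ 2 ≤ 1 := by
    have h1 : l2 v ^ 2 ≤ 1 := by nlinarith [l2_nonneg v]
    rwa [l2_sq] at h1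
  unfold l2
  apply Real.sqrt_le_sqrt
  calc ∑ i, (∑ j, M i j * v j)^2
      ≤ ∑ i, (∑ j, M i j ^2) * (∑ j, v j ^2) :=
        Finset.sum_le_sum fun i _ => Finset.sum_mul_sq_le_sq_mul_sq _ _ _
    _ ≤ ∑ i, (∑ j, M i j ^2) * 1 :=
        Finset.sum_le_sum fun i _ =>
          mul_le_mul_of_nonneg_left hv2 (Finset.sum_nonneg fun _ _ => sq_nonneg _)
    _ = ∑ i, ∑ j, M i j ^ 2 := by simp

lemma spec_nonneg {ι κ : Type*} [Fintype ι] [Fintype κ] (M : ι → κ → ℝ) :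
    0 ≤ spec M := by
  apply le_csSup (spec_bddAbove M)
  exact ⟨0, by simp [l2], by simp [l2]⟩

lemma spec_apply_le {ι κ : Type*} [Fintype ι] [Fintype κ] (M : ι → κ → ℝ) (v : κ → ℝ) :
    l2 (fun i => ∑ j, M i j * v j) ≤ spec M * l2 v := by
  rcases eq_or_lt_of_le (l2_nonneg v) with h | h
  · have hsum : ∑ j, v j ^ 2 = 0 := by
      have := l2_sq v; rw [← h] at this; simpa using this.symm
    have hz : ∀ j, v j = 0 := by
      intro j
      have := (Finset.sum_eq_zero_iff_of_nonneg (fun j _ => sq_nonneg (v j))).1 hsum j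
        (Finset.mem_univ j)
      exact pow_eq_zero_iff (n := 2) (by norm_num) |>.1 this
    have hM : (fun i => ∑ j, M i j * v j) = fun _ => (0:ℝ) := by
      funext i; simp [hz]
    rw [hM, l2_zero, ← h, mul_zero]
  · set c := (l2 v)⁻¹ with hc
    have hcpos : 0 < c := inv_pos.2 h
    have hunit : l2 (fun j => c * v j) = 1 := by
      rw [l2_smul hcpos.le, hc, inv_mul_cancel₀ (ne_of_gt h)]
    have hmem : l2 (fun i => ∑ j, M i j * (c * v j)) ≤ spec M :=
      le_csSup (spec_bddAbove M) ⟨fun j => c * v j, le_of_eq hunit, rfl⟩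
    have heq : (fun i => ∑ j, M i j * (c * v j)) = fun i => c * ∑ j, M i j * v j := by
      funext i; rw [Finset.mul_sum]; exact Finset.sum_congr rfl fun j _ => by ring
    rw [heq, l2_smul hcpos.le] at hmem
    have hm2 := mul_le_mul_of_nonneg_left hmem (le_of_lt h)
    calc l2 (fun i => ∑ j, M i j * v j)
        = l2 v * (c * l2 (fun i => ∑ j, M i j * v j)) := by
          rw [← mul_assoc, hc, mul_inv_cancel₀ (ne_of_gt h), one_mul]
      _ ≤ l2 v * spec M := hm2
      _ = spec M * l2 v := mul_comm _ _

/-- Asymmetric PSD perturbation: if range(A), range(C) ⊆ S₊,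
‖A − C‖ ≤ α/2 and CCᵀ ⪰ α²·P_{S₊}, then ACᵀ ⪰ ½CCᵀ ⪰ (α²/2)·P_{S₊} in the
quadratic-form sense. -/
theorem asymmetric_psd_perturbation
    {n p : ℕ} (α : ℝ)
    (A C : Fin n → Fin p → ℝ)
    (Splus : Submodule ℝ (EuclideanSpace ℝ (Fin n)))
    (hrangeA : ∀ v : Fin p → ℝ, toE (fun i => ∑ j, A i j * v j) ∈ Splus)
    (hrangeC : ∀ v : Fin p → ℝ, toE (fun i => ∑ j, C i j * v j) ∈ Splus)
    (hAC : spec (A - C) ≤ α / 2)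
    (hCC : ∀ r : EuclideanSpace ℝ (Fin n),
      α ^ 2 * ‖(Submodule.orthogonalProjection Splus r : EuclideanSpace ℝ (Fin n))‖ ^ 2 ≤
        ∑ j, (∑ i, r i * C i j) ^ 2) :
    ∀ r : EuclideanSpace ℝ (Fin n),
      (1 / 2) * ∑ j, (∑ i, r i * C i j) ^ 2 ≤
          ∑ j, (∑ i, r i * A i j) * (∑ i, r i * C i j) ∧
        α ^ 2 / 2 * ‖(Submodule.orthogonalProjection Splus r : EuclideanSpace ℝ (Fin n))‖ ^ 2 ≤
          (1 / 2) * ∑ j, (∑ i, r i * C i j) ^ 2 := by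
  intro r
  have hα : 0 ≤ α := by
    have := (spec_nonneg (A - C)).trans hAC; linarith
  set Pr : EuclideanSpace ℝ (Fin n) :=
    (Submodule.orthogonalProjection Splus r : EuclideanSpace ℝ (Fin n)) with hPr
  set u : Fin p → ℝ := fun j => ∑ i, r i * C i j with hu
  set w : Fin p → ℝ := fun j => ∑ i, r i * (A i j - C i j) with hw
  set s : EuclideanSpace ℝ (Fin n) := toE (fun i => ∑ j, (A i j - C i j) * w j) with hs
  have hsmem : s ∈ Splus := by
    have h1 := hrangeA w
    have h2 := hrangeC w
    have heq : s = toE (fun i => ∑ j, A i j * w j) - toE (fun i => ∑ j, C i j * w j) := by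
      apply (EuclideanSpace.equiv (Fin n) ℝ).injective
      funext i
      simp [hs, toE, sub_mul, Finset.sum_sub_distrib]
    rw [heq]
    exact Splus.sub_mem h1 h2
  -- ∑ w² = ⟪r, s⟫
  have hws : ∑ j, w j ^ 2 = (inner ℝ r s : ℝ) := by
    have hi : (inner ℝ r s : ℝ) = ∑ i, r i * (∑ j, (A i j - C i j) * w j) := by
      simp [PiLp.inner_apply, hs, toE, RCLike.inner_apply, mul_comm]
    rw [hi]
    calc ∑ j, w j ^ 2
        = ∑ j, ∑ i, r i * (A i j - C i j) * w j := by
          refine Finset.sum_congr rfl fun j _ => ?_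
          rw [show w j ^ 2 = w j * w j from sq (w j) ▸ rfl]
          conv_lhs => rw [hw]
          rw [Finset.sum_mul]
      _ = ∑ i, ∑ j, r i * (A i j - C i j) * w j := Finset.sum_comm
      _ = ∑ i, r i * (∑ j, (A i j - C i j) * w j) := by
          refine Finset.sum_congr rfl fun i _ => ?_
          rw [Finset.mul_sum]
          exact Finset.sum_congr rfl fun j _ => by ring
  have hinner : (inner ℝ r s : ℝ) = (inner ℝ Pr s : ℝ) := by
    rw [hPr, show ((Submodule.orthogonalProjection Splus r : _) : EuclideanSpace ℝ (Fin n)) =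
        Splus.starProjection r from rfl, Submodule.inner_starProjection_left_eq_right,
      Submodule.starProjection_eq_self_iff.2 hsmem]
  have hnorm_s : ‖s‖ = l2 (fun i => ∑ j, (A i j - C i j) * w j) := by
    rw [EuclideanSpace.norm_eq]
    unfold l2
    congr 1
    exact Finset.sum_congr rfl fun i _ => by simp [hs, toE, Real.norm_eq_abs, sq_abs]
  have hspec : l2 (fun i => ∑ j, (A i j - C i j) * w j) ≤ α / 2 * l2 w := by
    have h := spec_apply_le (A - C) w
    simp only [Pi.sub_apply] at h
    exact h.trans (mul_le_mul_of_nonneg_right hAC (l2_nonneg w))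
  have hwsq : (l2 w) ^ 2 ≤ ‖Pr‖ * (α / 2 * l2 w) := by
    calc (l2 w) ^ 2 = ∑ j, w j ^ 2 := l2_sq w
      _ = (inner ℝ Pr s : ℝ) := by rw [hws, hinner]
      _ ≤ ‖Pr‖ * ‖s‖ := real_inner_le_norm _ _
      _ ≤ ‖Pr‖ * (α / 2 * l2 w) :=
          mul_le_mul_of_nonneg_left (hnorm_s ▸ hspec) (norm_nonneg _)
  have hwle : l2 w ≤ α / 2 * ‖Pr‖ := by
    rcases eq_or_lt_of_le (l2_nonneg w) with h | h
    · rw [← h]; positivity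
    · nlinarith [hwsq, h]
  have hCCr := hCC r
  have hu_sq : (l2 u) ^ 2 = ∑ j, u j ^ 2 := l2_sq u
  have hαu : α * ‖Pr‖ ≤ l2 u := by
    nlinarith [l2_nonneg u, norm_nonneg Pr, hCCr, hu_sq]
  have hcs : -(∑ j, w j * u j) ≤ l2 w * l2 u := by
    have h := Real.sum_mul_le_sqrt_mul_sqrt Finset.univ (fun j => -(w j)) u
    simp only [neg_mul, Finset.sum_neg_distrib, neg_sq] at h
    simpa [l2] using h
  have hdecomp : ∑ j, (∑ i, r i * A i j) * u j = ∑ j, u j ^ 2 + ∑ j, w j * u j := by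
    rw [← Finset.sum_add_distrib]
    refine Finset.sum_congr rfl fun j _ => ?_
    have : (∑ i, r i * A i j) = u j + w j := by
      rw [hu, hw, ← Finset.sum_add_distrib]
      exact Finset.sum_congr rfl fun i _ => by ring
    rw [this]; ring
  constructor
  · rw [hdecomp]
    nlinarith [mul_le_mul_of_nonneg_right hwle (l2_nonneg u),
      mul_le_mul_of_nonneg_right hαu (l2_nonneg u), hcs, hu_sq]
  · linarith [hCCr]
end
end
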